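/- Consider the sweeping optimal control problem: minimize J[x,u] := (1/2)(x(2) − 1)² + ∫₀¹ (u(t) + 2 − t)² dt + ∫₁² (u(t) + 1)² dt over pairs (x,u), where u : [0,2] → ℝ is Lebesgue measurable, x : [0,2] → ℝ is absolutely continuous, −ẋ(t) ∈ N(x(t); (−∞, −u(t)]) for a.e. t ∈ [0,2] (in particular x(t) + u(t) ≤ 0 a.e.), and x(0) = 3/2. Define x̄(t) := 3/2 for t ∈ [0,1/2], x̄(t) := 2 − t for t ∈ [1/2,1], x̄(t) := 1 for t ∈ [1,2], and ū(t) := t − 2 for t ∈ [0,1], ū(t) := −1 for t ∈ (1,2]. Then (x̄,ū) is feasible with J[x̄,ū] = 0; moreover J[x,u] ≥ 0 for every feasible pair, and J[x,u] = 0 implies u(t) = ū(t) for a.e. t ∈ [0,2] and x(t) = x̄(t) for all t ∈ [0,2]. Hence (x̄,ū) is the unique optimal solution of the problem. -/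

import Mathlib

open Set Filter MeasureTheory Topology
open scoped RealInnerProductSpace

noncomputable section

/-- Normal cone of convex analysis: empty outside `Ω`. -/
def cNormalCone {A : Type*} [NormedAddCommGroup A] [InnerProductSpace ℝ A]
    (Ω : Set A) (z : A) : Set A :=
  {v | z ∈ Ω ∧ ∀ w ∈ Ω, ⟪v, w - z⟫ ≤ 0}

/-- Feasible triples `(x, ẋ, u)` of the controlled sweeping process
`−ẋ(t) ∈ N(x(t); (−∞,−u(t)])` a.e. on `[0,2]`, `x(0) = 3/2`, with `x` absolutely
continuous, `u` Lebesgue measurable, and finite running cost. -/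
def Feas19 (x x' u : ℝ → ℝ) : Prop :=
  Measurable u ∧
  IntervalIntegrable x' volume 0 2 ∧
  (∀ t ∈ Icc (0 : ℝ) 2, x t = x 0 + ∫ τ in (0 : ℝ)..t, x' τ) ∧
  (∀ᵐ t ∂(volume.restrict (Icc (0 : ℝ) 2)),
    -x' t ∈ cNormalCone (Iic (-u t)) (x t)) ∧
  x 0 = 3 / 2 ∧
  IntervalIntegrable (fun t => (u t + 2 - t) ^ 2) volume 0 1 ∧
  IntervalIntegrable (fun t => (u t + 1) ^ 2) volume 1 2

/-- The cost functional of the example. -/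
def J19 (x u : ℝ → ℝ) : ℝ :=
  (1 / 2) * (x 2 - 1) ^ 2 + (∫ t in (0 : ℝ)..1, (u t + 2 - t) ^ 2) +
    ∫ t in (1 : ℝ)..2, (u t + 1) ^ 2

/-- The optimal trajectory. -/
def xb19 : ℝ → ℝ := fun t => if t ≤ 1 / 2 then 3 / 2 else if t ≤ 1 then 2 - t else 1

/-- Its derivative. -/
def xb19' : ℝ → ℝ := fun t => if t ∈ Ioo (1 / 2 : ℝ) 1 then -1 else 0

/-- The optimal control. -/
def ub19 : ℝ → ℝ := fun t => if t ≤ 1 then t - 2 else -1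

/-- **Unique optimal solution of the sweeping optimal control example.**
The pair `(xb19, ub19)` is feasible with zero cost, the cost is nonnegative on all
feasible pairs, and any feasible pair of zero cost coincides with `(xb19, ub19)`
(a.e. for the control). -/
lemma hxb'eq : xb19' = (Ioo (1/2:ℝ) 1).indicator (fun _ => (-1:ℝ)) := by
  funext t; simp [xb19', Set.indicator_apply]

lemma hxb'int : IntervalIntegrable xb19' volume 0 2 := by
  rw [hxb'eq, intervalIntegrable_iff]
  exact (integrableOn_const (by simp)).indicator measurableSet_Ioo

lemma ub_meas : Measurable ub19 := by
  unfold ub19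
  exact Measurable.ite measurableSet_Iic (by fun_prop) (by fun_prop)

lemma xb'zero {τ : ℝ} (h : τ ∉ Ioo (1/2:ℝ) 1) : xb19' τ = 0 := if_neg h

lemma L0 {a b : ℝ} (hab : a ≤ b) (h : ∀ τ ∈ Ioc a b, xb19' τ = 0) :
    (∫ τ in a..b, xb19' τ) = 0 := by
  apply intervalIntegral.integral_zero_ae
  rw [uIoc_of_le hab]; exact Eventually.of_forall h

lemma L2 {a b : ℝ} (ha : 1/2 ≤ a) (hab : a ≤ b) (hb : b ≤ 1) :
    (∫ τ in a..b, xb19' τ) = -(b - a) := by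
  have h1 : (∫ τ in a..b, xb19' τ) = ∫ τ in a..b, (-1 : ℝ) := by
    apply intervalIntegral.integral_congr_ae
    have hne : ∀ᵐ τ : ℝ ∂volume, τ ≠ 1 := by
      exact (compl_mem_ae_iff.mpr (measure_singleton (1:ℝ)))
    filter_upwards [hne] with τ hτ hmem
    rw [uIoc_of_le hab] at hmem
    have hτIoo : τ ∈ Ioo (1/2:ℝ) 1 := ⟨lt_of_le_of_lt ha hmem.1, lt_of_le_of_ne (hmem.2.trans hb) hτ⟩
    simp only [xb19']; rw [if_pos hτIoo]
  rw [h1, intervalIntegral.integral_const]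
  simp

lemma xbint : ∀ c d : ℝ, 0 ≤ c → d ≤ 2 → c ≤ d → IntervalIntegrable xb19' volume c d := by
  intro c d hc hd hcd
  apply hxb'int.mono_set
  rw [uIcc_of_le (by norm_num : (0:ℝ) ≤ 2), uIcc_of_le hcd]
  exact Icc_subset_Icc hc hd

lemma prim : ∀ t ∈ Icc (0:ℝ) 2, xb19 t = xb19 0 + ∫ τ in (0:ℝ)..t, xb19' τ := by
  intro t ht
  have hx0 : xb19 0 = 3/2 := by norm_num [xb19]
  rcases le_or_gt t (1/2) with h1 | h1
  · rw [L0 ht.1 (fun τ hτ => xb'zero (fun hm => by have := hτ.2; have := hm.1; linarith))]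
    rw [hx0]; simp only [xb19, if_pos h1]; norm_num
  rcases le_or_gt t 1 with h2 | h2
  · have hsplit : (∫ τ in (0:ℝ)..(1/2), xb19' τ) + (∫ τ in (1/2:ℝ)..t, xb19' τ)
        = ∫ τ in (0:ℝ)..t, xb19' τ :=
      intervalIntegral.integral_add_adjacent_intervals
        (xbint 0 (1/2) le_rfl (by norm_num) (by norm_num))
        (xbint (1/2) t (by norm_num) (by linarith) h1.le)
    rw [← hsplit,
      L0 (by norm_num) (fun τ hτ => xb'zero (fun hm => by have := hτ.2; have := hm.1; linarith)),
      L2 le_rfl h1.le h2]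
    rw [hx0]; simp only [xb19, h1.not_ge, if_false, if_pos h2]; ring
  · have hs1 : (∫ τ in (0:ℝ)..(1/2), xb19' τ) + (∫ τ in (1/2:ℝ)..1, xb19' τ)
        = ∫ τ in (0:ℝ)..1, xb19' τ :=
      intervalIntegral.integral_add_adjacent_intervals
        (xbint 0 (1/2) le_rfl (by norm_num) (by norm_num))
        (xbint (1/2) 1 (by norm_num) (by norm_num) (by norm_num))
    have hs2 : (∫ τ in (0:ℝ)..1, xb19' τ) + (∫ τ in (1:ℝ)..t, xb19' τ)
        = ∫ τ in (0:ℝ)..t, xb19' τ :=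
      intervalIntegral.integral_add_adjacent_intervals
        (xbint 0 1 le_rfl (by norm_num) (by norm_num))
        (xbint 1 t (by norm_num) ht.2 h2.le)
    rw [← hs2, ← hs1,
      L0 (by norm_num) (fun τ hτ => xb'zero (fun hm => by have := hτ.2; have := hm.1; linarith)),
      L2 le_rfl (by norm_num) le_rfl,
      L0 h2.le (fun τ hτ => xb'zero (fun hm => by have := hτ.1; have := hm.2; linarith))]
    rw [hx0]; simp only [xb19, h1.not_ge, h2.not_ge, if_false]; norm_num

lemma cone_mem {a b m : ℝ} (hab : a ≤ b) (hm : 0 ≤ m) (h : m = 0 ∨ a = b) :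
    m ∈ cNormalCone (Iic b) a := by
  refine ⟨hab, fun w hw => ?_⟩
  have hw' : w ≤ b := hw
  rw [Real.inner_apply]
  rcases h with h | h
  · simp [h]
  · nlinarith [h ▸ hw']

lemma cone_bar : ∀ t ∈ Icc (0:ℝ) 2, -xb19' t ∈ cNormalCone (Iic (-ub19 t)) (xb19 t) := by
  intro t ht
  rcases le_or_gt t (1/2) with h1 | h1
  · have e1 : xb19 t = 3/2 := if_pos h1
    have e2 : xb19' t = 0 := if_neg (fun hm => by have := hm.1; linarith)
    have e3 : ub19 t = t - 2 := if_pos (by linarith)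
    rw [e1, e2, e3]; exact cone_mem (by linarith) (by norm_num) (Or.inl (by norm_num))
  rcases le_or_gt t 1 with h2 | h2
  · have e1 : xb19 t = 2 - t := by simp only [xb19]; rw [if_neg h1.not_ge, if_pos h2]
    have e3 : ub19 t = t - 2 := if_pos h2
    rcases lt_or_eq_of_le h2 with h2' | h2'
    · have e2 : xb19' t = -1 := if_pos ⟨h1, h2'⟩
      rw [e1, e2, e3]; exact cone_mem (by linarith) (by norm_num) (Or.inr (by ring))
    · have e2 : xb19' t = 0 := if_neg (fun hm => by have := hm.2; rw [h2'] at this; linarith)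
      rw [e1, e2, e3]; exact cone_mem (by linarith) (by norm_num) (Or.inl (by norm_num))
  · have e1 : xb19 t = 1 := by simp only [xb19]; rw [if_neg (by linarith : ¬ t ≤ 1/2), if_neg h2.not_ge]
    have e2 : xb19' t = 0 := if_neg (fun hm => by have := hm.2; linarith)
    have e3 : ub19 t = -1 := if_neg h2.not_ge
    rw [e1, e2, e3]; exact cone_mem (by norm_num) (by norm_num) (Or.inl (by norm_num))

lemma costint1 : IntervalIntegrable (fun t => (ub19 t + 2 - t) ^ 2) volume 0 1 := by
  rw [intervalIntegrable_iff]
  exact (integrableOn_zero (μ := volume) (s := Set.uIoc (0:ℝ) 1)).congr_fun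
    (fun t ht => by
      rw [uIoc_of_le (by norm_num : (0:ℝ) ≤ 1)] at ht
      have : ub19 t = t - 2 := if_pos ht.2
      rw [this]; ring) measurableSet_uIoc

lemma costint2 : IntervalIntegrable (fun t => (ub19 t + 1) ^ 2) volume 1 2 := by
  rw [intervalIntegrable_iff]
  exact (integrableOn_zero (μ := volume) (s := Set.uIoc (1:ℝ) 2)).congr_fun
    (fun t ht => by
      rw [uIoc_of_le (by norm_num : (1:ℝ) ≤ 2)] at ht
      have : ub19 t = -1 := if_neg ht.1.not_ge
      rw [this]; ring) measurableSet_uIoc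

lemma Jzero1 : (∫ t in (0:ℝ)..1, (ub19 t + 2 - t) ^ 2) = 0 := by
  apply intervalIntegral.integral_zero_ae
  apply Eventually.of_forall
  intro t ht
  rw [uIoc_of_le (by norm_num : (0:ℝ) ≤ 1)] at ht
  have : ub19 t = t - 2 := if_pos ht.2
  rw [this]; ring

lemma Jzero2 : (∫ t in (1:ℝ)..2, (ub19 t + 1) ^ 2) = 0 := by
  apply intervalIntegral.integral_zero_ae
  apply Eventually.of_forall
  intro t ht
  rw [uIoc_of_le (by norm_num : (1:ℝ) ≤ 2)] at ht
  have : ub19 t = -1 := if_neg ht.1.not_ge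
  rw [this]; ring

lemma cone_props {a b v : ℝ} (h : -v ∈ cNormalCone (Iic b) a) :
    a ≤ b ∧ v ≤ 0 ∧ (a < b → v = 0) := by
  obtain ⟨hm, hc⟩ := h
  have hab : a ≤ b := hm
  have h1 : (-v) * ((a - 1) - a) ≤ 0 := by
    have := hc (a - 1) (by simp only [mem_Iic]; linarith); rwa [Real.inner_apply] at this
  refine ⟨hab, by nlinarith, fun hlt => ?_⟩
  have h2 : (-v) * (b - a) ≤ 0 := by
    have := hc b (mem_Iic.2 le_rfl); rwa [Real.inner_apply] at this
  nlinarith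

lemma exists_mem_of_ae {P : ℝ → Prop} (h : ∀ᵐ τ ∂(volume : Measure ℝ), P τ)
    {a b : ℝ} (hab : a < b) : ∃ s ∈ Ioo a b, P s := by
  by_contra hn
  push_neg at hn
  have h0 : volume (Ioo a b) = 0 :=
    measure_mono_null (fun s hs => hn s hs) (ae_iff.mp h)
  rw [Real.volume_Ioo] at h0
  simp only [ENNReal.ofReal_eq_zero] at h0
  linarith

lemma Jnonneg (x u : ℝ → ℝ) : 0 ≤ J19 x u := by
  have h1 : (0:ℝ) ≤ ∫ t in (0:ℝ)..1, (u t + 2 - t) ^ 2 :=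
    intervalIntegral.integral_nonneg (by norm_num) (fun t _ => sq_nonneg _)
  have h2 : (0:ℝ) ≤ ∫ t in (1:ℝ)..2, (u t + 1) ^ 2 :=
    intervalIntegral.integral_nonneg (by norm_num) (fun t _ => sq_nonneg _)
  have h3 : (0:ℝ) ≤ (1/2) * (x 2 - 1)^2 := by positivity
  unfold J19; linarith

lemma uniq (x x' u : ℝ → ℝ) (hF : Feas19 x x' u) (hJ : J19 x u = 0) :
    (∀ᵐ t ∂(volume.restrict (Icc (0 : ℝ) 2)), u t = ub19 t) ∧
      ∀ t ∈ Icc (0 : ℝ) 2, x t = xb19 t := by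
  obtain ⟨humeas, hx'i, hrep, hsw, hx0, hi1, hi2⟩ := hF
  -- Step A : each cost term vanishes
  have hb0 : (0:ℝ) ≤ ∫ t in (0:ℝ)..1, (u t + 2 - t) ^ 2 :=
    intervalIntegral.integral_nonneg (by norm_num) (fun t _ => sq_nonneg _)
  have hc0 : (0:ℝ) ≤ ∫ t in (1:ℝ)..2, (u t + 1) ^ 2 :=
    intervalIntegral.integral_nonneg (by norm_num) (fun t _ => sq_nonneg _)
  have ha0 : (0:ℝ) ≤ (1/2) * (x 2 - 1)^2 := by positivity
  unfold J19 at hJ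
  have hx2 : x 2 = 1 := by nlinarith [sq_nonneg (x 2 - 1)]
  have hb : (∫ t in (0:ℝ)..1, (u t + 2 - t) ^ 2) = 0 := by nlinarith [sq_nonneg (x 2 - 1)]
  have hcz : (∫ t in (1:ℝ)..2, (u t + 1) ^ 2) = 0 := by nlinarith [sq_nonneg (x 2 - 1)]
  -- Step B : control identified a.e.
  have hu1 : ∀ᵐ t ∂(volume : Measure ℝ), t ∈ Ioc (0:ℝ) 1 → u t = t - 2 := by
    have h := (intervalIntegral.integral_eq_zero_iff_of_nonneg_ae
        (Eventually.of_forall (fun t => by simpa using sq_nonneg (u t + 2 - t))) hi1).mp hb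
    rw [Ioc_eq_empty (by norm_num : ¬ (1:ℝ) < 0), union_empty] at h
    have h' := (ae_restrict_iff' measurableSet_Ioc).mp h
    filter_upwards [h'] with t ht hmem
    have := ht hmem
    have h2 : u t + 2 - t = 0 := by simpa using this
    linarith
  have hu2 : ∀ᵐ t ∂(volume : Measure ℝ), t ∈ Ioc (1:ℝ) 2 → u t = -1 := by
    have h := (intervalIntegral.integral_eq_zero_iff_of_nonneg_ae
        (Eventually.of_forall (fun t => by simpa using sq_nonneg (u t + 1))) hi2).mp hcz
    rw [Ioc_eq_empty (by norm_num : ¬ (2:ℝ) < 1), union_empty] at h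
    have h' := (ae_restrict_iff' measurableSet_Ioc).mp h
    filter_upwards [h'] with t ht hmem
    have := ht hmem
    have h2 : u t + 1 = 0 := by simpa using this
    linarith
  have hne0 : ∀ᵐ t : ℝ ∂volume, t ≠ 0 := by
    exact (compl_mem_ae_iff.mpr (measure_singleton (0:ℝ)))
  have hue : ∀ᵐ t ∂(volume.restrict (Icc (0:ℝ) 2)), u t = ub19 t := by
    filter_upwards [ae_restrict_mem measurableSet_Icc, ae_restrict_of_ae hu1,
      ae_restrict_of_ae hu2, ae_restrict_of_ae hne0] with t htm h1 h2 h0'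
    rcases le_or_gt t 1 with h | h
    · rw [h1 ⟨lt_of_le_of_ne htm.1 (Ne.symm h0'), h⟩, ub19, if_pos h]
    · rw [h2 ⟨h, htm.2⟩, ub19, if_neg h.not_ge]
  refine ⟨hue, ?_⟩
  -- Step C : sweeping condition with ub19
  have hsw' : ∀ᵐ t ∂(volume : Measure ℝ), t ∈ Icc (0:ℝ) 2 →
      (x t ≤ -ub19 t ∧ x' t ≤ 0 ∧ (x t < -ub19 t → x' t = 0)) := by
    have hsg := (ae_restrict_iff' measurableSet_Icc).mp hsw
    have hug := (ae_restrict_iff' measurableSet_Icc).mp hue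
    filter_upwards [hsg, hug] with t h1 h2 ht
    have hc := h1 ht
    rw [h2 ht] at hc
    exact cone_props hc
  -- integral machinery
  have hii : ∀ a b : ℝ, 0 ≤ a → b ≤ 2 → a ≤ b → IntervalIntegrable x' volume a b := by
    intro a b ha hb hab
    apply hx'i.mono_set
    rw [uIcc_of_le (by norm_num : (0:ℝ) ≤ 2), uIcc_of_le hab]
    exact Icc_subset_Icc ha hb
  have hsub : ∀ s t : ℝ, s ∈ Icc (0:ℝ) 2 → t ∈ Icc (0:ℝ) 2 → s ≤ t →
      x t - x s = ∫ τ in s..t, x' τ := by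
    intro s t hs ht hst
    rw [hrep t ht, hrep s hs]
    have h := intervalIntegral.integral_interval_sub_left
      (hii 0 t le_rfl ht.2 ht.1) (hii 0 s le_rfl hs.2 hs.1)
    linarith
  -- monotonicity
  have hmono : ∀ s t : ℝ, s ∈ Icc (0:ℝ) 2 → t ∈ Icc (0:ℝ) 2 → s ≤ t → x t ≤ x s := by
    intro s t hs ht hst
    have h1 : x t - x s = ∫ τ in s..t, x' τ := hsub s t hs ht hst
    have h2 : (0:ℝ) ≤ ∫ τ in s..t, -x' τ := by
      apply intervalIntegral.integral_nonneg_of_ae_restrict hst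
      filter_upwards [ae_restrict_mem measurableSet_Icc, ae_restrict_of_ae hsw'] with τ hτm hτ
      have hτ2 : τ ∈ Icc (0:ℝ) 2 := ⟨le_trans hs.1 hτm.1, le_trans hτm.2 ht.2⟩
      simpa using neg_nonneg.2 (hτ hτ2).2.1
    rw [intervalIntegral.integral_neg] at h2
    linarith
  -- constancy
  have hconst : ∀ s t : ℝ, s ∈ Icc (0:ℝ) 2 → t ∈ Icc (0:ℝ) 2 → s ≤ t →
      (∀ᵐ τ ∂(volume : Measure ℝ), τ ∈ Ioc s t → x' τ = 0) → x t = x s := by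
    intro s t hs ht hst hz
    have h1 : x t - x s = ∫ τ in s..t, x' τ := hsub s t hs ht hst
    rw [intervalIntegral.integral_zero_ae (by rwa [uIoc_of_le hst])] at h1
    linarith
  -- continuity
  have hcont : ContinuousOn x (Icc (0:ℝ) 2) := by
    have h1 : ContinuousOn (fun t => x 0 + ∫ τ in (0:ℝ)..t, x' τ) (Icc (0:ℝ) 2) := by
      apply continuousOn_const.add
      have := intervalIntegral.continuousOn_primitive_interval'
        (μ := volume) (f := x') (b₁ := 0) (b₂ := 2) hx'i
        (by rw [uIcc_of_le (by norm_num : (0:ℝ) ≤ 2)]; exact ⟨le_rfl, by norm_num⟩)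
      rwa [uIcc_of_le (by norm_num : (0:ℝ) ≤ 2)] at this
    exact h1.congr (fun t ht => hrep t ht)
  have h02 : (0:ℝ) ∈ Icc (0:ℝ) 2 := ⟨le_rfl, by norm_num⟩
  have hhne : ∀ᵐ τ : ℝ ∂volume, τ ≠ (1/2 : ℝ) := by
    exact (compl_mem_ae_iff.mpr (measure_singleton (1/2 : ℝ)))
  -- x = 3/2 on [0, 1/2]
  have step1 : ∀ t ∈ Icc (0:ℝ) (1/2), x t = 3/2 := by
    intro t ht
    have htm : t ∈ Icc (0:ℝ) 2 := ⟨ht.1, le_trans ht.2 (by norm_num)⟩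
    rw [← hx0]
    apply hconst 0 t h02 htm ht.1
    filter_upwards [hsw', hhne] with τ hτ hne hmem
    have hτ2 : τ ∈ Icc (0:ℝ) 2 := ⟨hmem.1.le, le_trans hmem.2 (le_trans ht.2 (by norm_num))⟩
    obtain ⟨hle, hnp, hz⟩ := hτ hτ2
    apply hz
    have hxle : x τ ≤ 3/2 := hx0 ▸ hmono 0 τ h02 hτ2 hmem.1.le
    have hub : ub19 τ = τ - 2 := if_pos (by linarith [hmem.2, ht.2])
    have hlt : τ < 1/2 := lt_of_le_of_ne (hmem.2.trans ht.2) hne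
    rw [hub]; linarith
  have half : x (1/2 : ℝ) = 3/2 := step1 (1/2) ⟨by norm_num, le_rfl⟩
  -- upper bound on (1/2, 1]
  have hupper : ∀ t ∈ Ioc (1/2 : ℝ) 1, x t ≤ 2 - t := by
    intro t ht
    have htm : t ∈ Icc (0:ℝ) 2 := ⟨by linarith [ht.1], by linarith [ht.2]⟩
    apply le_of_forall_pos_le_add
    intro ε hε
    have hs₀ : max (1/2) (t - ε) < t := max_lt ht.1 (by linarith)
    obtain ⟨s, hsIoo, hPs⟩ := exists_mem_of_ae hsw' hs₀
    have hs12 : 1/2 < s := lt_of_le_of_lt (le_max_left _ _) hsIoo.1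
    have hste : t - ε < s := lt_of_le_of_lt (le_max_right _ _) hsIoo.1
    have hsIcc : s ∈ Icc (0:ℝ) 2 := ⟨by linarith, by linarith [hsIoo.2, ht.2]⟩
    have hle := (hPs hsIcc).1
    have hub : ub19 s = s - 2 := if_pos (le_of_lt (hsIoo.2.trans_le ht.2))
    rw [hub] at hle
    have hxts : x t ≤ x s := hmono s t hsIcc htm hsIoo.2.le
    linarith
  -- lower bound on [1/2, 1]
  have hlower : ∀ t ∈ Icc (1/2 : ℝ) 1, 2 - t ≤ x t := by
    intro t ht
    have htm : t ∈ Icc (0:ℝ) 2 := ⟨by linarith [ht.1], by linarith [ht.2]⟩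
    set S : Set ℝ := Icc (1/2) t ∩ (fun s => x s - (2 - s)) ⁻¹' (Ici 0) with hS
    have hmemS : ∀ {s : ℝ}, s ∈ S ↔ (s ∈ Icc (1/2:ℝ) t ∧ 0 ≤ x s - (2 - s)) := by
      intro s; rw [hS]; simp [mem_inter_iff, mem_preimage, mem_Ici]
    have hne : (1/2 : ℝ) ∈ S := hmemS.mpr ⟨⟨le_rfl, ht.1⟩, by rw [half]; norm_num⟩
    have hbdd : BddAbove S := ⟨t, fun s hs => (hmemS.mp hs).1.2⟩
    have hsubIcc : Icc (1/2 : ℝ) t ⊆ Icc (0:ℝ) 2 :=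
      Icc_subset_Icc (by norm_num) (le_trans ht.2 one_le_two)
    have hclosed : IsClosed S := by
      apply ContinuousOn.preimage_isClosed_of_isClosed
        (((hcont.mono hsubIcc).sub (continuousOn_const.sub continuousOn_id)))
        isClosed_Icc isClosed_Ici
    set m := sSup S with hm
    have hmS : m ∈ S := hclosed.csSup_mem ⟨1/2, hne⟩ hbdd
    obtain ⟨hmIcc, hmx⟩ := hmemS.mp hmS
    have hmt : m ≤ t := hmIcc.2
    have hmIcc2 : m ∈ Icc (0:ℝ) 2 := hsubIcc hmIcc
    rcases eq_or_lt_of_le hmt with heq | hlt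
    · rw [← heq]; linarith
    · have hxeq : x t = x m := by
        apply hconst m t hmIcc2 htm hmt
        filter_upwards [hsw'] with τ hτ hmem
        have hτIcc : τ ∈ Icc (0:ℝ) 2 :=
          ⟨le_trans hmIcc2.1 hmem.1.le, le_trans hmem.2 (le_trans ht.2 one_le_two)⟩
        obtain ⟨hle, _, hz⟩ := hτ hτIcc
        apply hz
        have hub : ub19 τ = τ - 2 := if_pos (hmem.2.trans ht.2)
        have hτS : τ ∉ S := fun hh => absurd (le_csSup hbdd hh) (not_le.2 hmem.1)
        have hτnot : ¬ (0 ≤ x τ - (2 - τ)) := fun hh =>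
          hτS (hmemS.mpr ⟨⟨le_trans hmIcc.1 hmem.1.le, hmem.2⟩, hh⟩)
        rw [hub]
        push_neg at hτnot
        linarith
      linarith
  -- middle segment
  have hmid : ∀ t ∈ Icc (1/2 : ℝ) 1, x t = 2 - t := by
    intro t ht
    rcases eq_or_lt_of_le ht.1 with heq | hlt
    · rw [← heq, half]; norm_num
    · exact le_antisymm (hupper t ⟨hlt, ht.2⟩) (hlower t ht)
  have hx1 : x 1 = 1 := by
    have := hmid 1 ⟨by norm_num, le_rfl⟩; linarith
  -- tail
  have htail : ∀ t ∈ Icc (1:ℝ) 2, x t = 1 := by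
    intro t ht
    have htm : t ∈ Icc (0:ℝ) 2 := ⟨by linarith [ht.1], ht.2⟩
    have h1m : (1:ℝ) ∈ Icc (0:ℝ) 2 := ⟨by norm_num, by norm_num⟩
    have h2m : (2:ℝ) ∈ Icc (0:ℝ) 2 := ⟨by norm_num, le_rfl⟩
    have hu : x t ≤ 1 := hx1 ▸ hmono 1 t h1m htm ht.1
    have hl : 1 ≤ x t := hx2 ▸ hmono t 2 htm h2m ht.2
    linarith
  -- conclusion
  intro t ht
  simp only [xb19]
  split_ifs with h1 h2
  · exact step1 t ⟨ht.1, h1⟩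
  · exact hmid t ⟨le_of_not_ge h1, h2⟩
  · exact htail t ⟨le_of_not_ge h2, ht.2⟩

theorem sweeping_example_unique_optimal_solution :
    Feas19 xb19 xb19' ub19 ∧ J19 xb19 ub19 = 0 ∧
    (∀ x x' u : ℝ → ℝ, Feas19 x x' u → 0 ≤ J19 x u) ∧
    (∀ x x' u : ℝ → ℝ, Feas19 x x' u → J19 x u = 0 →
      (∀ᵐ t ∂(volume.restrict (Icc (0 : ℝ) 2)), u t = ub19 t) ∧
      ∀ t ∈ Icc (0 : ℝ) 2, x t = xb19 t) := by
  refine ⟨⟨ub_meas, hxb'int, prim, (ae_restrict_iff' measurableSet_Icc).mpr (ae_of_all _ cone_bar), by norm_num [xb19], costint1, costint2⟩,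
    ?_, fun x x' u _ => Jnonneg x u, fun x x' u hF hJ => uniq x x' u hF hJ⟩
  unfold J19
  rw [Jzero1, Jzero2]
  norm_num [xb19]
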